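/- Let a, b, c be nonzero integers such that −ab is not a perfect square and gcd(a, b, c) = 1. Then X, Y ∈ M₂(ℤ) satisfy aX² + bY² = cI and XY = YX if and only if one of the following holds: (i) X = t₁I and Y = t₂I for integers t₁, t₂ with a·t₁² + b·t₂² = c; (ii) X = t₁I and Y = [[t₄, t₂],[t₃, −t₄]] for integers t₁, t₂, t₃, t₄ with a·t₁² + b(t₄² + t₂t₃) = c; (iii) there exist integers t₁, t₂, t₃, t₄, u, v with u ≠ c, g = gcd(va, u − c), such that c divides u·t₁ + v·b·t₄ and c divides v·a·t₁ − u·t₄, X = [[t₁, ((u−c)/g)·t₂],[((u−c)/g)·t₃, (u·t₁ + v·b·t₄)/c]], Y = [[t₄, (va/g)·t₂],[(va/g)·t₃, (v·a·t₁ − u·t₄)/c]], and the relations u² + abv² = c² and g²(a·t₁² + b·t₄²) + 2ac·t₂t₃·(c − u) = c·g² hold. -/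

import Mathlib

theorem aux_sq (a b : ℤ) (hnsq : ¬ ∃ s : ℤ, -(a * b) = s ^ 2) :
    ∀ s t : ℤ, a * s ^ 2 + b * t ^ 2 = 0 → s = 0 ∧ t = 0 := by
  intro s t hst
  by_contra hcon
  have ha : a ≠ 0 := by rintro rfl; exact hnsq ⟨0, by ring⟩
  have hb : b ≠ 0 := by rintro rfl; exact hnsq ⟨0, by ring⟩
  have hs0 : s ≠ 0 := by
    rintro rfl
    have : b * t ^ 2 = 0 := by linear_combination hst
    rcases mul_eq_zero.1 this with h | h
    · exact hb h
    · exact hcon ⟨rfl, pow_eq_zero_iff (by norm_num) |>.1 h⟩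
  have ht0 : t ≠ 0 := by
    rintro rfl
    have : a * s ^ 2 = 0 := by linear_combination hst
    rcases mul_eq_zero.1 this with h | h
    · exact ha h
    · exact hcon ⟨pow_eq_zero_iff (by norm_num) |>.1 h, rfl⟩
  set d : ℤ := (Int.gcd s t : ℤ) with hd
  have hdne : d ≠ 0 := by
    simp only [hd, ne_eq, Int.natCast_eq_zero, Int.gcd_eq_zero_iff]
    tauto
  have hds : d ∣ s := (Int.gcd_dvd_left _ _)
  have hdt : d ∣ t := (Int.gcd_dvd_right _ _)
  obtain ⟨s', hs'⟩ := hds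
  obtain ⟨t', ht'⟩ := hdt
  have hcop : IsCoprime s' t' := by
    apply Int.isCoprime_iff_gcd_eq_one.mpr
    have h1 : s / d = s' := by rw [hs']; exact Int.mul_ediv_cancel_left _ hdne
    have h2 : t / d = t' := by rw [ht']; exact Int.mul_ediv_cancel_left _ hdne
    rw [← h1, ← h2, hd]
    exact Int.gcd_div_gcd_div_gcd (Nat.pos_of_ne_zero (by
      intro h; exact hdne (by simp [hd, h])))
  have heq : a * s' ^ 2 + b * t' ^ 2 = 0 := by
    have h2 : d ^ 2 * (a * s' ^ 2 + b * t' ^ 2) = d ^ 2 * 0 := by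
      rw [hs', ht'] at hst; linear_combination hst
    exact mul_left_cancel₀ (pow_ne_zero 2 hdne) h2
  have ht'0 : t' ≠ 0 := by rintro rfl; rw [mul_zero] at ht'; exact ht0 ht'
  have hdvd0 : t' ^ 2 ∣ a * s' ^ 2 := ⟨-b, by linear_combination heq⟩
  have hdvda : t' ^ 2 ∣ a := (hcop.symm.pow).dvd_of_dvd_mul_right hdvd0
  obtain ⟨a1, ha1⟩ := hdvda
  have hb1 : b = -(a1 * s' ^ 2) := by
    have h2 : t' ^ 2 * b = t' ^ 2 * -(a1 * s' ^ 2) := by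
      rw [ha1] at heq; linear_combination heq
    exact mul_left_cancel₀ (pow_ne_zero 2 ht'0) h2
  exact hnsq ⟨a1 * s' * t', by rw [ha1, hb1]; ring⟩

theorem scalar_mat (t : ℤ) : (t • (1 : Matrix (Fin 2) (Fin 2) ℤ)) = !![t, 0; 0, t] := by
  ext i j
  fin_cases i <;> fin_cases j <;> simp [Matrix.smul_apply, Matrix.one_apply]

theorem rev3core (a b c gz M N W Z t1 t2 t3 t4 u v : ℤ) (hgz : gz ≠ 0) (hc : c ≠ 0)
    (hm : gz * M = u - c) (hn : gz * N = v * a)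
    (hw : c * W = u * t1 + v * b * t4) (hz : c * Z = v * a * t1 - u * t4)
    (hq : u ^ 2 + a * b * v ^ 2 = c ^ 2)
    (hE : gz ^ 2 * (a * t1 ^ 2 + b * t4 ^ 2) + 2 * a * c * t2 * t3 * (c - u) = c * gz ^ 2) :
    a • (!![t1, M * t2; M * t3, W] : Matrix (Fin 2) (Fin 2) ℤ) ^ 2
      + b • (!![t4, N * t2; N * t3, Z] : Matrix (Fin 2) (Fin 2) ℤ) ^ 2
      = c • (1 : Matrix (Fin 2) (Fin 2) ℤ)
    ∧ (!![t1, M * t2; M * t3, W] : Matrix (Fin 2) (Fin 2) ℤ) * !![t4, N * t2; N * t3, Z]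
      = !![t4, N * t2; N * t3, Z] * !![t1, M * t2; M * t3, W] := by
  have hgc : gz * c ≠ 0 := mul_ne_zero hgz hc
  constructor
  · ext i j
    fin_cases i <;> fin_cases j <;>
      simp only [Matrix.add_apply, Matrix.smul_apply, smul_eq_mul, pow_two, Matrix.mul_apply,
        Fin.sum_univ_two, Matrix.one_apply, Matrix.cons_val', Matrix.cons_val_zero,
        Matrix.cons_val_one, Matrix.head_cons, Matrix.head_fin_const, Matrix.empty_val',
        Matrix.cons_val_fin_one] <;> norm_num
    · -- (0,0)
      refine mul_left_cancel₀ (pow_ne_zero 2 hgz) ?_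
      linear_combination hE + a*t2*t3*hq + a*t2*t3*(gz*M+u-c)*hm + b*t2*t3*(gz*N+v*a)*hn
    · -- (0,1)
      refine mul_left_cancel₀ hgc ?_
      linear_combination a*t2*(c*t1+c*W)*hm + b*t2*(c*t4+c*Z)*hn + a*t2*(u-c)*hw
        + b*t2*(v*a)*hz + a*t1*t2*hq
    · -- (1,0)
      refine mul_left_cancel₀ hgc ?_
      linear_combination a*t3*(c*t1+c*W)*hm + b*t3*(c*t4+c*Z)*hn + a*t3*(u-c)*hw
        + b*t3*(v*a)*hz + a*t1*t3*hq
    · -- (1,1)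
      refine mul_left_cancel₀ (pow_ne_zero 2 (mul_ne_zero hc hgz)) ?_
      linear_combination c^2*hE + (gz^2*(a*t1^2+b*t4^2)+c^2*a*t2*t3)*hq
        + c^2*a*t2*t3*(gz*M+u-c)*hm + c^2*b*t2*t3*(gz*N+v*a)*hn
        + a*gz^2*(c*W+u*t1+v*b*t4)*hw + b*gz^2*(c*Z+v*a*t1-u*t4)*hz
  · ext i j
    fin_cases i <;> fin_cases j <;>
      simp only [Matrix.mul_apply, Fin.sum_univ_two, Matrix.cons_val', Matrix.cons_val_zero,
        Matrix.cons_val_one, Matrix.head_cons, Matrix.head_fin_const, Matrix.empty_val',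
        Matrix.cons_val_fin_one] <;> norm_num
    · ring
    · refine mul_left_cancel₀ hgc ?_
      linear_combination c*t2*(t1-W)*hn + c*t2*(Z-t4)*hm + t2*(u-c)*hz - t2*v*a*hw - t2*t4*hq
    · refine mul_left_cancel₀ hgc ?_
      linear_combination -c*t3*(t1-W)*hn - c*t3*(Z-t4)*hm - t3*(u-c)*hz + t3*v*a*hw + t3*t4*hq
    · ring

set_option maxHeartbeats 1600000 in
theorem stmt_12 (a b c : ℤ) (ha : a ≠ 0) (hb : b ≠ 0) (hc : c ≠ 0)
    (hnsq : ¬ ∃ s : ℤ, -(a * b) = s ^ 2) (hgcd : Int.gcd a (Int.gcd b c) = 1)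
    (X Y : Matrix (Fin 2) (Fin 2) ℤ) :
    (a • X ^ 2 + b • Y ^ 2 = c • (1 : Matrix (Fin 2) (Fin 2) ℤ) ∧ X * Y = Y * X) ↔
    ((∃ t₁ t₂ : ℤ, X = t₁ • (1 : Matrix (Fin 2) (Fin 2) ℤ) ∧
        Y = t₂ • (1 : Matrix (Fin 2) (Fin 2) ℤ) ∧ a * t₁ ^ 2 + b * t₂ ^ 2 = c) ∨
     (∃ t₁ t₂ t₃ t₄ : ℤ, X = t₁ • (1 : Matrix (Fin 2) (Fin 2) ℤ) ∧
        Y = !![t₄, t₂; t₃, -t₄] ∧ a * t₁ ^ 2 + b * (t₄ ^ 2 + t₂ * t₃) = c) ∨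
     (∃ t₁ t₂ t₃ t₄ u v g : ℤ, u ≠ c ∧ g = Int.gcd (v * a) (u - c) ∧
        c ∣ (u * t₁ + v * b * t₄) ∧ c ∣ (v * a * t₁ - u * t₄) ∧
        X = !![t₁, ((u - c) / g) * t₂; ((u - c) / g) * t₃, (u * t₁ + v * b * t₄) / c] ∧
        Y = !![t₄, (v * a / g) * t₂; (v * a / g) * t₃, (v * a * t₁ - u * t₄) / c] ∧
        u ^ 2 + a * b * v ^ 2 = c ^ 2 ∧
        g ^ 2 * (a * t₁ ^ 2 + b * t₄ ^ 2) + 2 * a * c * t₂ * t₃ * (c - u) = c * g ^ 2)) := by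
  constructor
  · rintro ⟨hM, hC⟩
    have hE00 : a * (X 0 0 * X 0 0 + X 0 1 * X 1 0) + b * (Y 0 0 * Y 0 0 + Y 0 1 * Y 1 0) = c := by
      have h := congrFun (congrFun hM 0) 0
      simp only [Matrix.add_apply, Matrix.smul_apply, smul_eq_mul, pow_two, Matrix.mul_apply,
        Fin.sum_univ_two, Matrix.one_apply] at h
      norm_num at h; linear_combination h
    have hE01 : a * (X 0 0 * X 0 1 + X 0 1 * X 1 1) + b * (Y 0 0 * Y 0 1 + Y 0 1 * Y 1 1) = 0 := by
      have h := congrFun (congrFun hM 0) 1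
      simp only [Matrix.add_apply, Matrix.smul_apply, smul_eq_mul, pow_two, Matrix.mul_apply,
        Fin.sum_univ_two, Matrix.one_apply] at h
      norm_num at h; linear_combination h
    have hE10 : a * (X 1 0 * X 0 0 + X 1 1 * X 1 0) + b * (Y 1 0 * Y 0 0 + Y 1 1 * Y 1 0) = 0 := by
      have h := congrFun (congrFun hM 1) 0
      simp only [Matrix.add_apply, Matrix.smul_apply, smul_eq_mul, pow_two, Matrix.mul_apply,
        Fin.sum_univ_two, Matrix.one_apply] at h
      norm_num at h; linear_combination h
    have hE11 : a * (X 1 0 * X 0 1 + X 1 1 * X 1 1) + b * (Y 1 0 * Y 0 1 + Y 1 1 * Y 1 1) = c := by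
      have h := congrFun (congrFun hM 1) 1
      simp only [Matrix.add_apply, Matrix.smul_apply, smul_eq_mul, pow_two, Matrix.mul_apply,
        Fin.sum_univ_two, Matrix.one_apply] at h
      norm_num at h; linear_combination h
    have hC00 : X 0 1 * Y 1 0 = Y 0 1 * X 1 0 := by
      have h := congrFun (congrFun hC 0) 0
      simp only [Matrix.mul_apply, Fin.sum_univ_two] at h
      linear_combination h
    have hC01 : Y 0 1 * (X 0 0 - X 1 1) = X 0 1 * (Y 0 0 - Y 1 1) := by
      have h := congrFun (congrFun hC 0) 1
      simp only [Matrix.mul_apply, Fin.sum_univ_two] at h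
      linear_combination h
    have hC10 : X 1 0 * (Y 0 0 - Y 1 1) = Y 1 0 * (X 0 0 - X 1 1) := by
      have h := congrFun (congrFun hC 1) 0
      simp only [Matrix.mul_apply, Fin.sum_univ_two] at h
      linear_combination h
    set x1 := X 0 0 with hx1v
    set x2 := X 0 1 with hx2v
    set x3 := X 1 0 with hx3v
    set x4 := X 1 1 with hx4v
    set y1 := Y 0 0 with hy1v
    set y2 := Y 0 1 with hy2v
    set y3 := Y 1 0 with hy3v
    set y4 := Y 1 1 with hy4v
    by_cases hXs : x2 = 0 ∧ x3 = 0 ∧ x1 = x4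
    · obtain ⟨hs2, hs3, hs14⟩ := hXs
      have hXeq : X = x1 • (1 : Matrix (Fin 2) (Fin 2) ℤ) := by
        rw [scalar_mat, Matrix.eta_fin_two X, ← hx1v, ← hx2v, ← hx3v, ← hx4v, hs2, hs3, ← hs14]
      by_cases hYs : y2 = 0 ∧ y3 = 0 ∧ y1 = y4
      · obtain ⟨ht2, ht3, ht14⟩ := hYs
        refine Or.inl ⟨x1, y1, hXeq, ?_, ?_⟩
        · rw [scalar_mat, Matrix.eta_fin_two Y, ← hy1v, ← hy2v, ← hy3v, ← hy4v, ht2, ht3, ← ht14]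
        · linear_combination hE00 - a * x3 * hs2 - b * y3 * ht2
      · have k2 : y2 * (y1 + y4) = 0 := by
          refine mul_left_cancel₀ hb ?_
          linear_combination hE01 - a * (x1 + x4) * hs2
        have k3 : y3 * (y1 + y4) = 0 := by
          refine mul_left_cancel₀ hb ?_
          linear_combination hE10 - a * (x1 + x4) * hs3
        have k1 : (y1 - y4) * (y1 + y4) = 0 := by
          refine mul_left_cancel₀ hb ?_
          linear_combination hE00 - hE11 - a * (x1 + x4) * hs14
        by_cases hQ0 : y1 + y4 = 0
        · refine Or.inr (Or.inl ⟨x1, y2, y3, y1, hXeq, ?_, ?_⟩)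
          · rw [Matrix.eta_fin_two Y, ← hy1v, ← hy2v, ← hy3v, ← hy4v,
              show y4 = -y1 by omega]
          · linear_combination hE00 - a * x3 * hs2
        · exfalso
          refine hYs ⟨?_, ?_, ?_⟩
          · rcases mul_eq_zero.1 k2 with h | h; exact h; exact absurd h hQ0
          · rcases mul_eq_zero.1 k3 with h | h; exact h; exact absurd h hQ0
          · rcases mul_eq_zero.1 k1 with h | h; omega; exact absurd h hQ0
    · -- X nonscalar
      set d : ℤ := (Int.gcd (x1 - x4) (Int.gcd x2 x3 : ℤ) : ℤ) with hdv
      have hd0 : d ≠ 0 := by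
        simp only [hdv, ne_eq, Int.natCast_eq_zero, Int.gcd_eq_zero_iff, Int.natCast_eq_zero]
        rintro ⟨h1, h2, h3⟩
        exact hXs ⟨h2, h3, by omega⟩
      obtain ⟨f1, hf1⟩ : d ∣ (x1 - x4) := (Int.gcd_dvd_left _ _)
      obtain ⟨f2, hf2⟩ : d ∣ x2 := dvd_trans (Int.gcd_dvd_right _ _) (Int.gcd_dvd_left _ _)
      obtain ⟨f3, hf3⟩ : d ∣ x3 := dvd_trans (Int.gcd_dvd_right _ _) (Int.gcd_dvd_right _ _)
      obtain ⟨A, B, C, hbez⟩ : ∃ A B C : ℤ, A * (x1 - x4) + B * x2 + C * x3 = d := by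
        refine ⟨Int.gcdA (x1 - x4) (Int.gcd x2 x3 : ℤ),
          (Int.gcdA x2 x3) * Int.gcdB (x1 - x4) (Int.gcd x2 x3 : ℤ),
          (Int.gcdB x2 x3) * Int.gcdB (x1 - x4) (Int.gcd x2 x3 : ℤ), ?_⟩
        have h1 := Int.gcd_eq_gcd_ab (x1 - x4) (Int.gcd x2 x3 : ℤ)
        have h2 := Int.gcd_eq_gcd_ab x2 x3
        rw [hdv]
        linear_combination -h1 - Int.gcdB (x1 - x4) (Int.gcd x2 x3 : ℤ) * h2
      obtain ⟨sy, hsy⟩ : ∃ sy : ℤ, sy = A * (y1 - y4) + B * y2 + C * y3 := ⟨_, rfl⟩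
      have hyf1 : y1 - y4 = sy * f1 := by
        refine mul_left_cancel₀ hd0 ?_
        linear_combination (-(y1 - y4)) * hbez - B * hC01 + C * hC10 +
          (A * (y1 - y4) + B * y2 + C * y3) * hf1 - d * f1 * hsy
      have hyf2 : y2 = sy * f2 := by
        refine mul_left_cancel₀ hd0 ?_
        linear_combination (-y2) * hbez + A * hC01 - C * hC00 +
          (A * (y1 - y4) + B * y2 + C * y3) * hf2 - d * f2 * hsy
      have hyf3 : y3 = sy * f3 := by
        refine mul_left_cancel₀ hd0 ?_
        linear_combination (-y3) * hbez - A * hC10 + B * hC00 +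
          (A * (y1 - y4) + B * y2 + C * y3) * hf3 - d * f3 * hsy
      have hx1e : x1 = x4 + d * f1 := by omega
      have hy1e : y1 = y4 + sy * f1 := by omega
      have hE00' : a * ((x4 + d * f1) * (x4 + d * f1) + (d * f2) * (d * f3)) +
          b * ((y4 + sy * f1) * (y4 + sy * f1) + (sy * f2) * (sy * f3)) = c := by
        rw [← hx1e, ← hf2, ← hf3, ← hy1e, ← hyf2, ← hyf3]; exact hE00
      have hE01' : a * ((x4 + d * f1) * (d * f2) + (d * f2) * x4) +
          b * ((y4 + sy * f1) * (sy * f2) + (sy * f2) * y4) = 0 := by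
        rw [← hx1e, ← hf2, ← hy1e, ← hyf2]; exact hE01
      have hE10' : a * ((d * f3) * (x4 + d * f1) + x4 * (d * f3)) +
          b * ((sy * f3) * (y4 + sy * f1) + y4 * (sy * f3)) = 0 := by
        rw [← hx1e, ← hf3, ← hy1e, ← hyf3]; exact hE10
      have hE11' : a * ((d * f3) * (d * f2) + x4 * x4) +
          b * ((sy * f3) * (sy * f2) + y4 * y4) = c := by
        rw [← hf2, ← hf3, ← hyf2, ← hyf3]; exact hE11
      have k1 : f1 * (2 * (a * x4 * d + b * y4 * sy) + (a * d ^ 2 + b * sy ^ 2) * f1) = 0 := by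
        linear_combination hE00' - hE11'
      have k2 : f2 * (2 * (a * x4 * d + b * y4 * sy) + (a * d ^ 2 + b * sy ^ 2) * f1) = 0 := by
        linear_combination hE01'
      have k3 : f3 * (2 * (a * x4 * d + b * y4 * sy) + (a * d ^ 2 + b * sy ^ 2) * f1) = 0 := by
        linear_combination hE10'
      have hG2 : 2 * (a * x4 * d + b * y4 * sy) + (a * d ^ 2 + b * sy ^ 2) * f1 = 0 := by
        by_contra h0
        have h1 : f1 = 0 := by rcases mul_eq_zero.1 k1 with h | h; exact h; exact absurd h h0
        have h2 : f2 = 0 := by rcases mul_eq_zero.1 k2 with h | h; exact h; exact absurd h h0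
        have h3 : f3 = 0 := by rcases mul_eq_zero.1 k3 with h | h; exact h; exact absurd h h0
        rw [h1, mul_zero] at hf1
        rw [h2, mul_zero] at hf2
        rw [h3, mul_zero] at hf3
        exact hXs ⟨hf2, hf3, by omega⟩
      have hG1 : a * x4 ^ 2 + b * y4 ^ 2 + (a * d ^ 2 + b * sy ^ 2) * (f2 * f3) = c := by
        linear_combination hE00' - f1 * hG2
      have hH0 : a * d ^ 2 + b * sy ^ 2 ≠ 0 := by
        intro h
        exact hd0 (aux_sq a b hnsq d sy (by linear_combination h)).1
      obtain ⟨u, huv⟩ : ∃ u : ℤ, u = c - (2 * (f2 * f3 * a * d ^ 2 + b * y4 ^ 2 +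
        b * y4 * sy * f1) - f1 * (a * x4 * d + b * y4 * sy)) := ⟨_, rfl⟩
      obtain ⟨v, hvv⟩ : ∃ v : ℤ, v = -(2 * (f2 * f3 * d * sy - x4 * y4) -
        f1 * (y4 * d + x4 * sy)) := ⟨_, rfl⟩
      have hu : (a * d ^ 2 + b * sy ^ 2) * u = (a * d ^ 2 + b * sy ^ 2) * c -
          2 * a * c * d ^ 2 := by
        rw [huv]
        linear_combination (-2 * a * d ^ 2) * hG1 + (a * x4 * d - b * y4 * sy) * hG2
      have hv : (a * d ^ 2 + b * sy ^ 2) * v = -(2 * c * d * sy) := by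
        rw [hvv]
        linear_combination (-2 * d * sy) * hG1 + (y4 * d + x4 * sy) * hG2
      have hq : u ^ 2 + a * b * v ^ 2 = c ^ 2 := by
        refine mul_left_cancel₀ (pow_ne_zero 2 hH0) ?_
        linear_combination ((a * d ^ 2 + b * sy ^ 2) * u + (a * d ^ 2 + b * sy ^ 2) * c -
          2 * a * c * d ^ 2) * hu + a * b * ((a * d ^ 2 + b * sy ^ 2) * v - 2 * c * d * sy) * hv
      have hune : u ≠ c := by
        intro h
        rw [h] at hu
        have h2 : a * c * d ^ 2 = 0 := by linarith
        exact mul_ne_zero (mul_ne_zero ha hc) (pow_ne_zero 2 hd0) h2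
      have hN2 : v * a * d = (u - c) * sy := by
        refine mul_left_cancel₀ hH0 ?_
        linear_combination a * d * hv - sy * hu
      have hN3a : u * x1 + v * b * y1 = c * x4 := by
        refine mul_left_cancel₀ hH0 ?_
        linear_combination x1 * hu + b * y1 * hv +
          ((a * d ^ 2 + b * sy ^ 2) * c - 2 * a * c * d ^ 2) * hx1e +
          (-2 * b * c * d * sy) * hy1e + (-c * d) * hG2
      have hN3b : v * a * x1 - u * y1 = c * y4 := by
        refine mul_left_cancel₀ hH0 ?_
        linear_combination a * x1 * hv - y1 * hu + (-2 * a * c * d * sy) * hx1e +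
          (2 * a * c * d ^ 2 - (a * d ^ 2 + b * sy ^ 2) * c) * hy1e + (-c * sy) * hG2
      set gz : ℤ := (Int.gcd (v * a) (u - c) : ℤ) with hgzv
      have hgz0 : gz ≠ 0 := by
        simp only [hgzv, ne_eq, Int.natCast_eq_zero, Int.gcd_eq_zero_iff]
        rintro ⟨-, h2⟩
        exact hune (by omega)
      obtain ⟨m, hm⟩ : gz ∣ (u - c) := (Int.gcd_dvd_right _ _)
      obtain ⟨n, hn⟩ : gz ∣ (v * a) := (Int.gcd_dvd_left _ _)
      have hm0 : m ≠ 0 := by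
        rintro rfl
        rw [mul_zero] at hm
        exact hune (by omega)
      have hcop : IsCoprime m n := by
        rw [Int.isCoprime_iff_gcd_eq_one, Int.gcd_comm]
        have h1 : (v * a) / gz = n := by rw [hn]; exact Int.mul_ediv_cancel_left _ hgz0
        have h2 : (u - c) / gz = m := by rw [hm]; exact Int.mul_ediv_cancel_left _ hgz0
        rw [← h1, ← h2, hgzv]
        exact Int.gcd_div_gcd_div_gcd (Nat.pos_of_ne_zero (by
          intro h; exact hgz0 (by simp [hgzv, h])))
      have crossx2 : n * x2 = m * y2 := by
        refine mul_left_cancel₀ hgz0 ?_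
        linear_combination x2 * hn.symm - y2 * hm.symm + v * a * hf2 - (u - c) * hyf2 + f2 * hN2
      have crossx3 : n * x3 = m * y3 := by
        refine mul_left_cancel₀ hgz0 ?_
        linear_combination x3 * hn.symm - y3 * hm.symm + v * a * hf3 - (u - c) * hyf3 + f3 * hN2
      obtain ⟨t2, ht2x⟩ : m ∣ x2 := hcop.dvd_of_dvd_mul_left ⟨y2, crossx2⟩
      obtain ⟨t3, ht3x⟩ : m ∣ x3 := hcop.dvd_of_dvd_mul_left ⟨y3, crossx3⟩
      have ht2y : y2 = n * t2 := by
        refine mul_left_cancel₀ hm0 ?_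
        linear_combination -crossx2 + n * ht2x
      have ht3y : y3 = n * t3 := by
        refine mul_left_cancel₀ hm0 ?_
        linear_combination -crossx3 + n * ht3x
      have hFQ : gz ^ 2 * (a * x1 ^ 2 + b * y1 ^ 2) + 2 * a * c * t2 * t3 * (c - u) =
          c * gz ^ 2 := by
        linear_combination gz ^ 2 * hE00 + (-a * gz ^ 2) * (x3 * ht2x + m * t2 * ht3x) +
          (-b * gz ^ 2) * (y3 * ht2y + n * t2 * ht3y) +
          (a * t2 * t3) * (gz * m + u - c) * hm + (b * t2 * t3) * (gz * n + v * a) * hn +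
          (-a * t2 * t3) * hq
      have he1 : (u - c) / gz = m := by rw [hm]; exact Int.mul_ediv_cancel_left _ hgz0
      have he2 : (v * a) / gz = n := by rw [hn]; exact Int.mul_ediv_cancel_left _ hgz0
      have he3 : (u * x1 + v * b * y1) / c = x4 := by
        rw [hN3a]; exact Int.mul_ediv_cancel_left _ hc
      have he4 : (v * a * x1 - u * y1) / c = y4 := by
        rw [hN3b]; exact Int.mul_ediv_cancel_left _ hc
      refine Or.inr (Or.inr ⟨x1, t2, t3, y1, u, v, gz, hune, hgzv, ⟨x4, hN3a⟩, ⟨y4, hN3b⟩,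
        ?_, ?_, hq, hFQ⟩)
      · rw [he1, he3, Matrix.eta_fin_two X, ← hx1v, ← hx2v, ← hx3v, ← hx4v, ht2x, ht3x]
      · rw [he2, he4, Matrix.eta_fin_two Y, ← hy1v, ← hy2v, ← hy3v, ← hy4v, ht2y, ht3y]
  · intro h
    rcases h with ⟨t1, t2, hX, hY, heq⟩ | ⟨t1, t2, t3, t4, hX, hY, heq⟩ |
      ⟨t1, t2, t3, t4, u, v, g, hune, hg, hd1, hd2, hX, hY, hq, hE⟩
    · subst hX hY
      constructor
      · ext i j
        fin_cases i <;> fin_cases j <;>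
          simp only [Matrix.add_apply, Matrix.smul_apply, smul_eq_mul, pow_two, Matrix.mul_apply,
            Fin.sum_univ_two, Matrix.one_apply] <;> norm_num <;>
          first | ring1 | linear_combination heq | exact Or.inr (by ring)
      · ext i j
        fin_cases i <;> fin_cases j <;>
          simp only [Matrix.mul_apply, Fin.sum_univ_two, Matrix.smul_apply, Matrix.one_apply] <;>
          norm_num <;> first | ring1 | exact Or.inr (by ring)
    · subst hX hY
      constructor
      · ext i j
        fin_cases i <;> fin_cases j <;>
          simp only [Matrix.add_apply, Matrix.smul_apply, smul_eq_mul, pow_two, Matrix.mul_apply,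
            Fin.sum_univ_two, Matrix.one_apply, Matrix.cons_val', Matrix.cons_val_zero,
            Matrix.cons_val_one, Matrix.head_cons, Matrix.head_fin_const, Matrix.empty_val',
            Matrix.cons_val_fin_one] <;> norm_num <;>
          first | ring1 | linear_combination heq | exact Or.inr (by ring)
      · ext i j
        fin_cases i <;> fin_cases j <;>
          simp only [Matrix.mul_apply, Fin.sum_univ_two, Matrix.smul_apply, Matrix.one_apply,
            Matrix.cons_val', Matrix.cons_val_zero, Matrix.cons_val_one, Matrix.head_cons,
            Matrix.head_fin_const, Matrix.empty_val', Matrix.cons_val_fin_one] <;> norm_num <;>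
          first | ring1 | exact Or.inr (by ring)
    · have hgne : g ≠ 0 := by
        rw [hg]
        simp only [ne_eq, Int.natCast_eq_zero, Int.gcd_eq_zero_iff]
        rintro ⟨-, h2⟩
        exact hune (by omega)
      have hmd : g ∣ (u - c) := hg ▸ Int.gcd_dvd_right (v * a) (u - c)
      have hnd : g ∣ (v * a) := hg ▸ Int.gcd_dvd_left (v * a) (u - c)
      have hm : g * ((u - c) / g) = u - c := Int.mul_ediv_cancel' hmd
      have hn : g * ((v * a) / g) = v * a := Int.mul_ediv_cancel' hnd
      have hw : c * ((u * t1 + v * b * t4) / c) = u * t1 + v * b * t4 := Int.mul_ediv_cancel' hd1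
      have hz : c * ((v * a * t1 - u * t4) / c) = v * a * t1 - u * t4 := Int.mul_ediv_cancel' hd2
      subst hX hY
      exact rev3core a b c g _ _ _ _ t1 t2 t3 t4 u v hgne hc hm hn hw hz hq hE
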